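/- Let W be a continuous random variable with distribution F, let X be a non-negative integer-valued random variable independent of the W's, and let W^{<X>} denote the maximum of X i.i.d. copies of W (and 0 when X = 0). If the nodes of the complete r-ary tree T(r,d) of depth d are weighted i.i.d. from F, then the bonus S(0) of the root is distributed as W^{<X_{d,r}>}, where X_{d,r} satisfies X_{0,r}=1 and X_{d,r} = (X_{d−1,r}^{(r)}+1)·B(X_{d−1,r}^{(r)}+1). -/

import Mathlib

open MeasureTheory
open scoped ENNReal Classical

/-- The node set of the complete `r`-ary tree `T(r,d)` of depth `d`:
addresses of length at most `d`. -/
def TreeNode (r d : ℕ) : Type := {l : List (Fin r) // l.length ≤ d}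

noncomputable instance (r d : ℕ) : Fintype (TreeNode r d) :=
  Fintype.ofInjective (fun l : TreeNode r d => fun i : Fin d => l.1[(i : ℕ)]?)
    (by
      rintro ⟨a, ha⟩ ⟨b, hb⟩ h
      apply Subtype.ext
      apply List.ext_getElem?
      intro n
      by_cases hn : n < d
      · exact congrFun h ⟨n, hn⟩
      · rw [List.getElem?_eq_none (le_trans ha (le_of_not_gt hn)),
          List.getElem?_eq_none (le_trans hb (le_of_not_gt hn))])

/-- The bonus of each node of `T(r,d)` for a given weighting `w`:
`S(l) = w l` for a leaf (depth `d`), and `S(l) = w l · 1{w l > max over children of S}`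
otherwise. -/
noncomputable def Sfun (r d : ℕ) (w : TreeNode r d → ℝ) : TreeNode r d → ℝ := fun l =>
  if h : l.1.length = d then w l
  else
    have hlt : l.1.length < d := lt_of_le_of_ne l.2 h
    if ((List.ofFn fun i : Fin r =>
          Sfun r d w ⟨l.1 ++ [i], by simp [List.length_append]; omega⟩).foldr max 0) < w l
    then w l else 0
termination_by l => d - l.1.length
decreasing_by
  all_goals
    simp only [List.length_append, List.length_cons, List.length_nil]
    omega

/-- Law of `(j+1)·B(j+1)` : takes value `j+1` with probability `1/(j+1)` and `0` otherwise. -/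
noncomputable def Bstep (j : ℕ) : PMF ℕ :=
  (PMF.bernoulli ((j + 1 : NNReal))⁻¹
      (inv_le_one_of_one_le₀ (by exact_mod_cast Nat.one_le_iff_ne_zero.mpr (Nat.succ_ne_zero j)))).map
    (fun b => if b then j + 1 else 0)

/-- Law of the sum of `r` i.i.d. copies of a random variable with law `p`. -/
noncomputable def conv : ℕ → PMF ℕ → PMF ℕ
  | 0, _ => PMF.pure 0
  | r + 1, p => (conv r p).bind fun a => p.map fun b => a + b

/-- The sequence `X_{d,r}`: `X_{0,r} = 1`,
`X_{d,r} = (X_{d-1,r}^{(r)} + 1)·B(X_{d-1,r}^{(r)} + 1)`. -/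
noncomputable def Xd : ℕ → ℕ → PMF ℕ
  | 0, _ => PMF.pure 1
  | d + 1, r => (conv r (Xd d r)).bind Bstep

/-- The law of `W^{<k>}`, the maximum of `k` i.i.d. samples from `ν` (`0` when `k = 0`). -/
noncomputable def maxLaw (ν : Measure ℝ) (k : ℕ) : Measure ℝ :=
  Measure.map (fun v : Fin k → ℝ => (List.ofFn v).foldr max 0) (Measure.pi fun _ : Fin k => ν)

namespace RootBonusAux

/-- max-fold of a finite tuple with floor 0. -/
noncomputable def fmax {n : ℕ} (v : Fin n → ℝ) : ℝ := (List.ofFn v).foldr max 0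

lemma foldr_max_nonneg : ∀ l : List ℝ, 0 ≤ l.foldr max 0
  | [] => le_refl 0
  | a :: l => le_trans (foldr_max_nonneg l) (le_max_right _ _)

lemma fmax_nonneg {n : ℕ} (v : Fin n → ℝ) : 0 ≤ fmax v := foldr_max_nonneg _

lemma fmax_zero (v : Fin 0 → ℝ) : fmax v = 0 := by simp [fmax]

lemma fmax_succ {n : ℕ} (v : Fin (n + 1) → ℝ) :
    fmax v = max (v 0) (fmax fun i => v i.succ) := by
  simp [fmax, List.ofFn_succ]

lemma le_fmax {n : ℕ} (v : Fin n → ℝ) (i : Fin n) : v i ≤ fmax v := by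
  induction n with
  | zero => exact absurd i.2 (by omega)
  | succ n ih =>
    rw [fmax_succ]
    rcases Fin.eq_zero_or_eq_succ i with h | ⟨j, rfl⟩
    · subst h; exact le_max_left _ _
    · exact le_trans (ih (fun k => v k.succ) j) (le_max_right _ _)

lemma exists_eq_fmax {n : ℕ} (v : Fin n → ℝ) (h : 0 < fmax v) : ∃ j, v j = fmax v := by
  induction n with
  | zero => rw [fmax_zero] at h; exact absurd h (lt_irrefl 0)
  | succ n ih =>
    rw [fmax_succ] at h ⊢
    rcases le_total (fmax fun i => v i.succ) (v 0) with h0 | h0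
    · exact ⟨0, (max_eq_left h0).symm⟩
    · rw [max_eq_right h0] at h ⊢
      obtain ⟨j, hj⟩ := ih _ h
      exact ⟨j.succ, hj⟩

lemma fmax_lt_iff {n : ℕ} (v : Fin n → ℝ) {x : ℝ} (hx : 0 < x) :
    fmax v < x ↔ ∀ i, v i < x := by
  constructor
  · exact fun h i => lt_of_le_of_lt (le_fmax v i) h
  · intro h
    induction n with
    | zero => rw [fmax_zero]; exact hx
    | succ n ih => rw [fmax_succ]; exact max_lt (h 0) (ih _ fun i => h i.succ)

lemma measurable_fmax {n : ℕ} : Measurable (fmax (n := n)) := by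
  induction n with
  | zero =>
    have : fmax (n := 0) = fun _ => (0 : ℝ) := funext fun v => fmax_zero v
    rw [this]; exact measurable_const
  | succ n ih =>
    have : fmax (n := n + 1) = fun v => max (v 0) (fmax fun i => v i.succ) :=
      funext fun v => fmax_succ v
    rw [this]
    exact Measurable.max (measurable_pi_apply 0)
      (ih.comp (measurable_pi_lambda _ fun i => measurable_pi_apply _))

end RootBonusAux
namespace RootBonusAux

/-- The root node. -/
def root (r d : ℕ) : TreeNode r d := ⟨[], by simp⟩

/-- The node obtained by prepending a child direction. -/
def cons {r d : ℕ} (i : Fin r) (m : TreeNode r d) : TreeNode r (d + 1) :=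
  ⟨i :: m.1, by simpa using Nat.succ_le_succ m.2⟩

lemma child_le {r d : ℕ} {l : List (Fin r)} (h : l.length < d) (i : Fin r) :
    (l ++ [i]).length ≤ d := by simp; omega

lemma Sfun_leaf {r d : ℕ} (w : TreeNode r d → ℝ) (l : TreeNode r d) (h : l.1.length = d) :
    Sfun r d w l = w l := by
  unfold Sfun; rw [dif_pos h]

lemma Sfun_node {r d : ℕ} (w : TreeNode r d → ℝ) (l : TreeNode r d) (h : l.1.length ≠ d)
    (hlt : l.1.length < d) :
    Sfun r d w l =
      if fmax (fun i : Fin r => Sfun r d w ⟨l.1 ++ [i], child_le hlt i⟩) < w l then w l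
      else 0 := by
  conv_lhs => unfold Sfun
  rw [dif_neg h]
  rfl

lemma Sfun_nonneg {r d : ℕ} (w : TreeNode r d → ℝ) (hw : ∀ l, 0 ≤ w l) (l : TreeNode r d) :
    0 ≤ Sfun r d w l := by
  by_cases h : l.1.length = d
  · rw [Sfun_leaf w l h]; exact hw l
  · rw [Sfun_node w l h (lt_of_le_of_ne l.2 h)]
    split_ifs
    · exact hw l
    · exact le_refl 0

lemma Sfun_cons {r d : ℕ} (w : TreeNode r (d + 1) → ℝ) :
    ∀ (m : TreeNode r d) (i : Fin r),
      Sfun r (d + 1) w (cons i m) = Sfun r d (fun m' => w (cons i m')) m := by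
  suffices H : ∀ (k : ℕ) (m : TreeNode r d), d - m.1.length ≤ k → ∀ i : Fin r,
      Sfun r (d + 1) w (cons i m) = Sfun r d (fun m' => w (cons i m')) m from
    fun m i => H (d - m.1.length) m le_rfl i
  intro k
  induction k with
  | zero =>
    intro m hm i
    have hlen : m.1.length = d := by have := m.2; omega
    have hlen' : (cons i m).1.length = d + 1 := by simp [cons, hlen]
    rw [Sfun_leaf _ _ hlen', Sfun_leaf _ _ hlen]
  | succ k ih =>
    intro m hm i
    by_cases hlen : m.1.length = d
    · have hlen' : (cons i m).1.length = d + 1 := by simp [cons, hlen]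
      rw [Sfun_leaf _ _ hlen', Sfun_leaf _ _ hlen]
    · have hlt : m.1.length < d := lt_of_le_of_ne m.2 hlen
      have hlen' : (cons i m).1.length ≠ d + 1 := by simp [cons]; omega
      have hlt' : (cons i m).1.length < d + 1 := by simp [cons]; omega
      rw [Sfun_node w _ hlen' hlt', Sfun_node _ m hlen hlt]
      have harg : (fun j : Fin r => Sfun r (d + 1) w ⟨(cons i m).1 ++ [j], child_le hlt' j⟩)
          = fun j : Fin r =>
            Sfun r d (fun m' => w (cons i m')) ⟨m.1 ++ [j], child_le hlt j⟩ := by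
        funext j
        have hnode : (⟨(cons i m).1 ++ [j], child_le hlt' j⟩ : TreeNode r (d + 1))
            = cons i ⟨m.1 ++ [j], child_le hlt j⟩ := Subtype.ext (by simp [cons])
        rw [hnode, ih ⟨m.1 ++ [j], child_le hlt j⟩ (by simp; omega) i]
      rw [harg]

lemma Sfun_root_succ {r d : ℕ} (w : TreeNode r (d + 1) → ℝ) :
    Sfun r (d + 1) w (root r (d + 1)) =
      if fmax (fun i : Fin r => Sfun r d (fun m => w (cons i m)) (root r d))
          < w (root r (d + 1)) then w (root r (d + 1))
      else 0 := by
  have h : (root r (d + 1)).1.length ≠ d + 1 := by simp [root]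
  have hlt : (root r (d + 1)).1.length < d + 1 := by simp [root]
  rw [Sfun_node w _ h hlt]
  have harg : (fun i : Fin r =>
        Sfun r (d + 1) w ⟨(root r (d + 1)).1 ++ [i], child_le hlt i⟩)
      = fun i : Fin r => Sfun r d (fun m => w (cons i m)) (root r d) := by
    funext i
    have hnode : (⟨(root r (d + 1)).1 ++ [i], child_le hlt i⟩ : TreeNode r (d + 1))
        = cons i (root r d) := Subtype.ext (by simp [cons, root])
    rw [hnode, Sfun_cons w (root r d) i]
  rw [harg]

lemma measurable_Sfun {r d : ℕ} (l : TreeNode r d) :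
    Measurable fun w : TreeNode r d → ℝ => Sfun r d w l := by
  suffices H : ∀ (k : ℕ) (l : TreeNode r d), d - l.1.length ≤ k →
      Measurable fun w : TreeNode r d → ℝ => Sfun r d w l from H (d - l.1.length) l le_rfl
  intro k
  induction k with
  | zero =>
    intro l hl
    have hlen : l.1.length = d := by have := l.2; omega
    simp only [Sfun_leaf _ _ hlen]
    exact measurable_pi_apply l
  | succ k ih =>
    intro l hl
    by_cases hlen : l.1.length = d
    · simp only [Sfun_leaf _ _ hlen]
      exact measurable_pi_apply l
    · have hlt : l.1.length < d := lt_of_le_of_ne l.2 hlen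
      simp only [Sfun_node _ _ hlen hlt]
      have hm : Measurable fun w : TreeNode r d → ℝ =>
          fmax (fun i : Fin r => Sfun r d w ⟨l.1 ++ [i], child_le hlt i⟩) :=
        measurable_fmax.comp (measurable_pi_lambda _ fun i =>
          ih ⟨l.1 ++ [i], child_le hlt i⟩ (by simp; omega))
      exact Measurable.ite (measurableSet_lt hm (measurable_pi_apply l))
        (measurable_pi_apply l) measurable_const

end RootBonusAux
namespace RootBonusAux

open MeasureTheory

variable {ι κ : Type*} [Fintype ι] [Fintype κ]

lemma pi_cylinder (P : Measure ℝ) [IsProbabilityMeasure P] (a : ι) {s : Set ℝ}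
    (hs : MeasurableSet s) :
    Measure.pi (fun _ : ι => P) {w | w a ∈ s} = P s := by
  have h : {w : ι → ℝ | w a ∈ s} = Set.univ.pi (Function.update (fun _ => Set.univ) a s) := by
    ext w
    simp only [Set.mem_setOf_eq, Set.mem_pi, Set.mem_univ, forall_true_left]
    constructor
    · intro hw i
      by_cases hi : i = a
      · subst hi; simpa using hw
      · simp [Function.update_of_ne hi]
    · intro hw
      have := hw a
      simpa using this
  rw [h, Measure.pi_pi]
  rw [Fintype.prod_eq_single a (fun i hi => by simp [Function.update_of_ne hi])]
  simp

lemma map_eval_pi (P : Measure ℝ) [IsProbabilityMeasure P] (a : ι) :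
    Measure.map (fun w : ι → ℝ => w a) (Measure.pi fun _ : ι => P) = P := by
  ext s hs
  rw [Measure.map_apply (measurable_pi_apply a) hs]
  exact pi_cylinder P a hs

lemma pi_map_reindex (e : ι ≃ κ) (P : Measure ℝ) [IsProbabilityMeasure P] :
    Measure.map (fun w : κ → ℝ => fun i => w (e i)) (Measure.pi fun _ : κ => P)
      = Measure.pi (fun _ : ι => P) := by
  have h := (MeasureTheory.measurePreserving_piCongrLeft (fun _ : κ => P) e).symm
    (MeasurableEquiv.piCongrLeft (fun _ : κ => ℝ) e)
  have hfun : ⇑(MeasurableEquiv.piCongrLeft (fun _ : κ => ℝ) e).symm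
      = fun w : κ → ℝ => fun i => w (e i) := by
    funext w i
    rfl
  rw [← hfun]
  exact h.map_eq

lemma pi_map_comp {X Y : Type*} [MeasurableSpace X] [MeasurableSpace Y] (P : Measure X)
    [IsProbabilityMeasure P] (f : X → Y) (hf : Measurable f) :
    Measure.map (fun g : ι → X => fun i => f (g i)) (Measure.pi fun _ : ι => P)
      = Measure.pi fun _ : ι => Measure.map f P := by
  have : IsProbabilityMeasure (Measure.map f P) := Measure.isProbabilityMeasure_map hf.aemeasurable
  refine (Measure.pi_eq (μ := fun _ : ι => Measure.map f P) fun s hs => ?_).symm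
  have hmeas : Measurable fun g : ι → X => fun i => f (g i) :=
    measurable_pi_lambda _ fun i => hf.comp (measurable_pi_apply i)
  rw [Measure.map_apply hmeas (MeasurableSet.univ_pi fun i => hs i)]
  have hpre : (fun g : ι → X => fun i => f (g i)) ⁻¹' Set.univ.pi s
      = Set.univ.pi fun i => f ⁻¹' s i := by
    ext g; simp [Set.mem_pi]
  rw [hpre, Measure.pi_pi]
  exact Finset.prod_congr rfl fun i _ => (Measure.map_apply hf (hs i)).symm

end RootBonusAux
namespace RootBonusAux

open MeasureTheory

lemma prob_measure_unique_eq {Z : Type*} [MeasurableSpace Z] [Unique Z] (μ1 μ2 : Measure Z)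
    [IsProbabilityMeasure μ1] [IsProbabilityMeasure μ2] : μ1 = μ2 := by
  ext s _
  rcases Set.eq_empty_or_nonempty s with rfl | hne
  · simp
  · rw [hne.eq_univ]
    simp

/-- Splitting an i.i.d. array of `Fin r × α` variables into `r` independent blocks,
applying a map `F` to each block. -/
lemma key_split (r : ℕ) {α : Type*} [Fintype α] (m : Measure ℝ) [IsProbabilityMeasure m]
    (F : (α → ℝ) → ℝ) (hF : Measurable F) :
    Measure.map (fun g : Fin r × α → ℝ => fun i : Fin r => F fun a => g (i, a))
        (Measure.pi fun _ : Fin r × α => m)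
      = Measure.pi fun _ : Fin r => Measure.map F (Measure.pi fun _ : α => m) := by
  have hη : IsProbabilityMeasure (Measure.map F (Measure.pi fun _ : α => m)) :=
    Measure.isProbabilityMeasure_map hF.aemeasurable
  induction r with
  | zero =>
    have hmeas : Measurable fun g : Fin 0 × α → ℝ => fun i : Fin 0 => F fun a => g (i, a) :=
      measurable_pi_lambda _ fun i => i.elim0
    haveI : IsProbabilityMeasure
        (Measure.map (fun g : Fin 0 × α → ℝ => fun i : Fin 0 => F fun a => g (i, a))
          (Measure.pi fun _ : Fin 0 × α => m)) := Measure.isProbabilityMeasure_map hmeas.aemeasurable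
    haveI : Unique (Fin 0 → ℝ) := ⟨⟨fun i => i.elim0⟩, fun f => funext fun i => i.elim0⟩
    exact prob_measure_unique_eq _ _
  | succ r ih =>
    set η := Measure.map F (Measure.pi fun _ : α => m) with hηdef
    -- the index equivalence
    set e : (α ⊕ (Fin r × α)) ≃ (Fin (r + 1) × α) :=
      { toFun := Sum.elim (fun a => ((0 : Fin (r + 1)), a)) fun p => (p.1.succ, p.2)
        invFun := fun q => Fin.cases (Sum.inl q.2) (fun j => Sum.inr (j, q.2)) q.1
        left_inv := by rintro (a | ⟨i, a⟩) <;> simp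
        right_inv := by
          rintro ⟨i, a⟩
          refine Fin.cases ?_ (fun j => ?_) i <;> simp } with hedef
    set Φr := fun (g : Fin r × α → ℝ) (i : Fin r) => F fun a => g (i, a) with hΦrdef
    have hmeasΦr : Measurable Φr :=
      measurable_pi_lambda _ fun i =>
        hF.comp (measurable_pi_lambda _ fun a => measurable_pi_apply (i, a))
    have hmeasre : Measurable fun w : Fin (r + 1) × α → ℝ => fun x : α ⊕ (Fin r × α) => w (e x) :=
      measurable_pi_lambda _ fun x => measurable_pi_apply _
    -- composite description of the target function
    have hcomp : (fun g : Fin (r + 1) × α → ℝ => fun i : Fin (r + 1) => F fun a => g (i, a))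
        = (⇑(MeasurableEquiv.piFinSuccAbove (fun _ : Fin (r + 1) => ℝ) 0).symm)
          ∘ (Prod.map F Φr)
          ∘ (⇑(MeasurableEquiv.sumPiEquivProdPi (fun _ : α ⊕ (Fin r × α) => ℝ)))
          ∘ (fun w : Fin (r + 1) × α → ℝ => fun x : α ⊕ (Fin r × α) => w (e x)) := by
      funext g
      simp only [Function.comp_apply, MeasurableEquiv.piFinSuccAbove,
        MeasurableEquiv.sumPiEquivProdPi, MeasurableEquiv.symm_mk, MeasurableEquiv.coe_mk,
        Equiv.symm_symm]
      funext i
      refine Fin.cases ?_ (fun j => ?_) i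
      · simp [Equiv.sumPiEquivProdPi, Prod.map, hedef]
      · simp [Equiv.sumPiEquivProdPi, Prod.map, hedef, Fin.succAbove, hΦrdef]
    rw [hcomp]
    rw [← Measure.map_map (MeasurableEquiv.piFinSuccAbove (fun _ : Fin (r + 1) => ℝ) 0).symm.measurable
        ((hF.prodMap hmeasΦr).comp
          ((MeasurableEquiv.sumPiEquivProdPi (fun _ : α ⊕ (Fin r × α) => ℝ)).measurable.comp
            hmeasre)),
      ← Measure.map_map (hF.prodMap hmeasΦr)
        ((MeasurableEquiv.sumPiEquivProdPi (fun _ : α ⊕ (Fin r × α) => ℝ)).measurable.comp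
          hmeasre),
      ← Measure.map_map
        (MeasurableEquiv.sumPiEquivProdPi (fun _ : α ⊕ (Fin r × α) => ℝ)).measurable hmeasre]
    rw [pi_map_reindex e m]
    rw [(measurePreserving_sumPiEquivProdPi (fun _ : α ⊕ (Fin r × α) => m)).map_eq]
    rw [← Measure.map_prod_map _ _ hF hmeasΦr, ih]
    exact ((measurePreserving_piFinSuccAbove (fun _ : Fin (r + 1) => η) 0).symm
      (MeasurableEquiv.piFinSuccAbove (fun _ : Fin (r + 1) => ℝ) 0)).map_eq

end RootBonusAux
namespace RootBonusAux

open MeasureTheory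

lemma Bstep_apply (n k : ℕ) :
    Bstep n k = if k = n + 1 then ((n : ℝ≥0∞) + 1)⁻¹
      else if k = 0 then 1 - ((n : ℝ≥0∞) + 1)⁻¹ else 0 := by
  unfold Bstep
  rw [PMF.map_apply, tsum_bool]
  norm_num [PMF.bernoulli_apply]
  by_cases h1 : k = n + 1
  · subst h1
    rw [if_pos rfl, if_neg (by omega), if_pos rfl, zero_add]
  · rw [if_neg h1, add_zero, if_neg h1]

lemma bind_Bstep_mix (q : PMF ℕ) (m : ℕ → ℝ≥0∞) (hm0 : m 0 = 0) :
    ∑' k, (q.bind Bstep) k * m k = ∑' n, q n * (((n : ℝ≥0∞) + 1)⁻¹ * m (n + 1)) := by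
  simp only [PMF.bind_apply]
  have h1 : ∀ k, (∑' n, q n * Bstep n k) * m k = ∑' n, q n * Bstep n k * m k := fun k =>
    ENNReal.tsum_mul_right.symm
  simp only [h1]
  rw [ENNReal.tsum_comm]
  refine tsum_congr fun n => ?_
  rw [tsum_eq_single (n + 1)]
  · rw [Bstep_apply, if_pos rfl]
    ring
  · intro k hk
    rcases Nat.eq_zero_or_pos k with rfl | hkpos
    · rw [hm0, mul_zero]
    · rw [Bstep_apply, if_neg hk, if_neg (by omega), mul_zero, zero_mul]

lemma conv_genfun (p : PMF ℕ) (y : ℝ≥0∞) :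
    ∀ r : ℕ, ∑' n, conv r p n * y ^ n = (∑' k, p k * y ^ k) ^ r := by
  intro r
  induction r with
  | zero =>
    show ∑' n, PMF.pure 0 n * y ^ n = _
    rw [tsum_eq_single 0]
    · simp [PMF.pure_apply]
    · intro n hn
      simp [PMF.pure_apply, hn]
  | succ r ih =>
    show ∑' n, ((conv r p).bind fun a => p.map fun b => a + b) n * y ^ n = _
    simp only [PMF.bind_apply]
    have h1 : ∀ n, (∑' a, conv r p a * (p.map fun b => a + b) n) * y ^ n
        = ∑' a, conv r p a * (p.map fun b => a + b) n * y ^ n := fun n =>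
      ENNReal.tsum_mul_right.symm
    simp only [h1]
    rw [ENNReal.tsum_comm]
    have h2 : ∀ a, ∑' n, conv r p a * (p.map fun b => a + b) n * y ^ n
        = conv r p a * y ^ a * ∑' k, p k * y ^ k := by
      intro a
      calc ∑' n, conv r p a * (p.map fun b => a + b) n * y ^ n
          = conv r p a * ∑' n, (p.map fun b => a + b) n * y ^ n := by
            rw [← ENNReal.tsum_mul_left]
            exact tsum_congr fun n => by ring
        _ = conv r p a * ∑' n, ∑' b, (if n = a + b then p b else 0) * y ^ n := by
            congr 1
            refine tsum_congr fun n => ?_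
            rw [PMF.map_apply, ← ENNReal.tsum_mul_right]
            exact tsum_congr fun b => by congr
        _ = conv r p a * ∑' b, ∑' n, (if n = a + b then p b else 0) * y ^ n := by
            rw [ENNReal.tsum_comm]
        _ = conv r p a * ∑' b, p b * y ^ (a + b) := by
            congr 1
            refine tsum_congr fun b => ?_
            rw [tsum_eq_single (a + b)]
            · rw [if_pos rfl]
            · intro n hn; rw [if_neg hn, zero_mul]
        _ = conv r p a * y ^ a * ∑' k, p k * y ^ k := by
            rw [mul_assoc]
            congr 1
            rw [← ENNReal.tsum_mul_left]
            refine tsum_congr fun b => ?_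
            rw [pow_add]
            ring
    simp only [h2]
    rw [ENNReal.tsum_mul_right, ih]
    ring

end RootBonusAux
namespace RootBonusAux

open MeasureTheory

variable {ν : Measure ℝ} [IsProbabilityMeasure ν]

lemma maxLaw_apply (k : ℕ) {s : Set ℝ} (hs : MeasurableSet s) :
    maxLaw ν k s = Measure.pi (fun _ : Fin k => ν) {v | fmax v ∈ s} :=
  Measure.map_apply measurable_fmax hs

lemma isProbabilityMeasure_maxLaw (k : ℕ) : IsProbabilityMeasure (maxLaw ν k) :=
  Measure.isProbabilityMeasure_map (measurable_fmax (n := k)).aemeasurable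

lemma maxLaw_Iio (k : ℕ) {x : ℝ} (hx : 0 < x) :
    maxLaw ν k (Set.Iio x) = ν (Set.Iio x) ^ k := by
  rw [maxLaw_apply k measurableSet_Iio]
  have h : {v : Fin k → ℝ | fmax v ∈ Set.Iio x} = Set.univ.pi fun _ => Set.Iio x := by
    ext v
    simp [fmax_lt_iff v hx, Set.mem_pi]
  rw [h, Measure.pi_pi]
  simp

lemma maxLaw_Iic_neg (k : ℕ) {t : ℝ} (ht : t < 0) : maxLaw ν k (Set.Iic t) = 0 := by
  rw [maxLaw_apply k measurableSet_Iic]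
  have h : {v : Fin k → ℝ | fmax v ∈ Set.Iic t} = ∅ := by
    ext v
    simp only [Set.mem_setOf_eq, Set.mem_empty_iff_false, iff_false, Set.mem_Iic, not_le]
    exact lt_of_lt_of_le ht (fmax_nonneg v)
  rw [h, measure_empty]

lemma maxLaw_Ioi_zero_of_nonneg {t : ℝ} (ht : 0 ≤ t) : maxLaw ν 0 (Set.Ioi t) = 0 := by
  rw [maxLaw_apply 0 measurableSet_Ioi]
  have h : {v : Fin 0 → ℝ | fmax v ∈ Set.Ioi t} = ∅ := by
    ext v
    simp only [Set.mem_setOf_eq, Set.mem_empty_iff_false, iff_false, Set.mem_Ioi, not_lt,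
      fmax_zero]
    exact ht
  rw [h, measure_empty]

variable [NullSingletonClass ν]

/-- Ties have measure zero. -/
lemma pi_ties {n : ℕ} {i j : Fin (n + 1)} (hij : i ≠ j) :
    Measure.pi (fun _ : Fin (n + 1) => ν) {v | v i = v j} = 0 := by
  obtain ⟨k, hk⟩ := Fin.exists_succAbove_eq hij
  set ψ := MeasurableEquiv.piFinSuccAbove (fun _ : Fin (n + 1) => ℝ) j with hψdef
  have hψ : ⇑ψ = fun v : Fin (n + 1) → ℝ => (v j, fun l : Fin n => v (j.succAbove l)) := by
    funext v
    rfl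
  set B : Set (ℝ × (Fin n → ℝ)) := {q | q.2 k = q.1} with hBdef
  have hBmeas : MeasurableSet B :=
    measurableSet_eq_fun (measurable_snd.eval) measurable_fst
  have hpre : {v : Fin (n + 1) → ℝ | v i = v j} = ψ ⁻¹' B := by
    ext v
    simp only [Set.mem_setOf_eq, Set.mem_preimage, hψ, hBdef, hk]
  rw [hpre,
    (measurePreserving_piFinSuccAbove (fun _ : Fin (n + 1) => ν) j).measure_preimage
      hBmeas.nullMeasurableSet]
  rw [Measure.prod_apply hBmeas]
  have hsec : ∀ x : ℝ, (Measure.pi fun _ : Fin n => ν) (Prod.mk x ⁻¹' B) = 0 := by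
    intro x
    have h1 : Prod.mk x ⁻¹' B = {w : Fin n → ℝ | w k ∈ ({x} : Set ℝ)} := by
      ext w; simp [hBdef]
    rw [h1, pi_cylinder ν k (measurableSet_singleton x), measure_singleton]
  simp only [hsec]
  simp

/-- The key order-statistics identity. -/
lemma key_integral (n : ℕ) {t : ℝ} (ht : 0 ≤ t) :
    maxLaw ν (n + 1) (Set.Ioi t)
      = ((n : ℝ≥0∞) + 1) * ∫⁻ x in Set.Ioi t, ν (Set.Iio x) ^ n ∂ν := by
  set μ := Measure.pi (fun _ : Fin (n + 1) => ν) with hμdef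
  set A : Fin (n + 1) → Set (Fin (n + 1) → ℝ) := fun j =>
    {v | t < v j} ∩ ⋂ (i) (_ : i ≠ j), {v | v i < v j} with hAdef
  have hmemA : ∀ j v, v ∈ A j ↔ t < v j ∧ ∀ i, i ≠ j → v i < v j := by
    intro j v
    simp [hAdef, Set.mem_iInter]
  have hAmeas : ∀ j, MeasurableSet (A j) := by
    intro j
    refine MeasurableSet.inter (measurableSet_lt measurable_const (measurable_pi_apply j)) ?_
    exact MeasurableSet.iInter fun i => MeasurableSet.iInter fun _ =>
      measurableSet_lt (measurable_pi_apply i) (measurable_pi_apply j)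
  have hdisj : Pairwise (Function.onFun Disjoint A) := by
    intro j j' hjj'
    rw [Function.onFun, Set.disjoint_left]
    intro v hvj hvj'
    rw [hmemA] at hvj hvj'
    exact lt_irrefl _ (lt_trans (hvj.2 j' (Ne.symm hjj')) (hvj'.2 j hjj'))
  -- permutation invariance
  have hperm : ∀ j, μ (A j) = μ (A (Fin.last n)) := by
    intro j
    by_cases hj : j = Fin.last n
    · rw [hj]
    · have hswapj : Equiv.swap j (Fin.last n) j = Fin.last n := Equiv.swap_apply_left _ _
      have hswapl : Equiv.swap j (Fin.last n) (Fin.last n) = j := Equiv.swap_apply_right _ _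
      have hswapinv : ∀ i, Equiv.swap j (Fin.last n) (Equiv.swap j (Fin.last n) i) = i :=
        fun i => Equiv.swap_apply_self _ _ _
      set e := Equiv.swap j (Fin.last n) with hedef
      have hmeasF : Measurable fun w : Fin (n + 1) → ℝ => fun i => w (e i) :=
        measurable_pi_lambda _ fun i => measurable_pi_apply _
      have hpre : (fun w : Fin (n + 1) → ℝ => fun i => w (e i)) ⁻¹' A j = A (Fin.last n) := by
        ext w
        simp only [Set.mem_preimage]
        rw [hmemA, hmemA, hswapj]
        constructor
        · rintro ⟨h1, h2⟩
          refine ⟨h1, fun i' hi' => ?_⟩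
          have hij : e i' ≠ j := by
            intro hcon
            apply hi'
            have := congrArg e hcon
            rwa [hswapinv, hswapj] at this
          have := h2 (e i') hij
          rwa [hswapinv] at this
        · rintro ⟨h1, h2⟩
          refine ⟨h1, fun i hi => ?_⟩
          have hei : e i ≠ Fin.last n := by
            intro hcon
            apply hi
            have := congrArg e hcon
            rwa [hswapinv, hswapl] at this
          exact h2 (e i) hei
      calc μ (A j)
          = Measure.map (fun w : Fin (n + 1) → ℝ => fun i => w (e i)) μ (A j) := by
            rw [pi_map_reindex e ν]
        _ = μ ((fun w : Fin (n + 1) → ℝ => fun i => w (e i)) ⁻¹' A j) :=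
            Measure.map_apply hmeasF (hAmeas j)
        _ = μ (A (Fin.last n)) := by rw [hpre]
  -- null tie set
  set N := ⋃ p : Fin (n + 1) × Fin (n + 1), {v : Fin (n + 1) → ℝ | p.1 ≠ p.2 ∧ v p.1 = v p.2}
    with hNdef
  have hN : μ N = 0 := by
    refine measure_iUnion_null fun p => ?_
    by_cases hp : p.1 = p.2
    · have : {v : Fin (n + 1) → ℝ | p.1 ≠ p.2 ∧ v p.1 = v p.2} = ∅ := by
        ext v; simp [hp]
      rw [this, measure_empty]
    · exact measure_mono_null (fun v hv => hv.2) (pi_ties hp)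
  -- covering
  have hcover1 : (⋃ j, A j) ⊆ {v | t < fmax v} := by
    rintro v hv
    obtain ⟨j, hj⟩ := Set.mem_iUnion.mp hv
    rw [hmemA] at hj
    exact lt_of_lt_of_le hj.1 (le_fmax v j)
  have hcover2 : {v : Fin (n + 1) → ℝ | t < fmax v} ⊆ (⋃ j, A j) ∪ N := by
    intro v hv
    have hpos : 0 < fmax v := lt_of_le_of_lt ht hv
    obtain ⟨j, hj⟩ := exists_eq_fmax v hpos
    by_cases hties : ∃ i, i ≠ j ∧ v i = v j
    · right
      obtain ⟨i, hi, hvi⟩ := hties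
      exact Set.mem_iUnion.mpr ⟨(i, j), ⟨hi, hvi⟩⟩
    · left
      push_neg at hties
      refine Set.mem_iUnion.mpr ⟨j, (hmemA j v).mpr ⟨by rw [hj]; exact hv, fun i hij => ?_⟩⟩
      exact lt_of_le_of_ne (hj ▸ le_fmax v i) (hties i hij)
  -- measure of the union
  have hunion : μ {v | t < fmax v} = μ (⋃ j, A j) := by
    refine le_antisymm ?_ (measure_mono hcover1)
    calc μ {v | t < fmax v} ≤ μ ((⋃ j, A j) ∪ N) := measure_mono hcover2
      _ ≤ μ (⋃ j, A j) + μ N := measure_union_le _ _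
      _ = μ (⋃ j, A j) := by rw [hN, add_zero]
  have hsum : μ (⋃ j, A j) = ((n : ℝ≥0∞) + 1) * μ (A (Fin.last n)) := by
    rw [measure_iUnion hdisj hAmeas, tsum_fintype]
    rw [Finset.sum_congr rfl fun j _ => hperm j, Finset.sum_const, Finset.card_univ,
      Fintype.card_fin, nsmul_eq_mul]
    congr 1
    push_cast
    ring
  -- last block via Fubini
  have hlast : μ (A (Fin.last n)) = ∫⁻ x in Set.Ioi t, ν (Set.Iio x) ^ n ∂ν := by
    set ψ := MeasurableEquiv.piFinSuccAbove (fun _ : Fin (n + 1) => ℝ) (Fin.last n) with hψdef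
    set B : Set (ℝ × (Fin n → ℝ)) := {q | t < q.1} ∩ ⋂ i, {q | q.2 i < q.1} with hBdef
    have hBmeas : MeasurableSet B := by
      refine MeasurableSet.inter (measurableSet_lt measurable_const measurable_fst) ?_
      exact MeasurableSet.iInter fun i =>
        measurableSet_lt (measurable_snd.eval) measurable_fst
    have hmemB : ∀ q : ℝ × (Fin n → ℝ), q ∈ B ↔ t < q.1 ∧ ∀ i, q.2 i < q.1 := by
      intro q; simp [hBdef, Set.mem_iInter]
    have hpre : A (Fin.last n) = ψ ⁻¹' B := by
      ext v
      rw [Set.mem_preimage, hmemA]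
      have hψv : ψ v = (v (Fin.last n), fun l : Fin n => v ((Fin.last n).succAbove l)) := rfl
      rw [hψv, hmemB]
      constructor
      · rintro ⟨h1, h2⟩
        exact ⟨h1, fun i => h2 _ (Fin.succAbove_ne (Fin.last n) i)⟩
      · rintro ⟨h1, h2⟩
        refine ⟨h1, fun i hi => ?_⟩
        obtain ⟨k, hk⟩ := Fin.exists_succAbove_eq hi
        rw [← hk]
        exact h2 k
    rw [hpre,
      (measurePreserving_piFinSuccAbove (fun _ : Fin (n + 1) => ν) (Fin.last n)).measure_preimage
        hBmeas.nullMeasurableSet]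
    rw [Measure.prod_apply hBmeas]
    have hsec : ∀ x : ℝ, (Measure.pi fun _ : Fin n => ν) (Prod.mk x ⁻¹' B)
        = Set.indicator (Set.Ioi t) (fun x => ν (Set.Iio x) ^ n) x := by
      intro x
      by_cases hx : t < x
      · have h1 : Prod.mk x ⁻¹' B = Set.univ.pi fun _ : Fin n => Set.Iio x := by
          ext w
          simp [hmemB, hx, Set.mem_pi]
        rw [h1, Measure.pi_pi, Set.indicator_of_mem (Set.mem_Ioi.mpr hx)]
        simp
      · have h1 : Prod.mk x ⁻¹' B = ∅ := by
          ext w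
          simp [hmemB, hx]
        rw [h1, measure_empty, Set.indicator_of_notMem (fun hc => hx (Set.mem_Ioi.mp hc))]
    rw [lintegral_congr hsec, lintegral_indicator measurableSet_Ioi]
  rw [maxLaw_apply (n + 1) measurableSet_Ioi]
  have : {v : Fin (n + 1) → ℝ | fmax v ∈ Set.Ioi t} = {v | t < fmax v} := rfl
  rw [this, hunion, hsum, hlast]

end RootBonusAux
namespace RootBonusAux

open MeasureTheory

variable {ν : Measure ℝ} [IsProbabilityMeasure ν]

lemma mixture_prob (p : PMF ℕ) :
    IsProbabilityMeasure (Measure.sum fun k => p k • maxLaw ν k) := by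
  constructor
  rw [Measure.sum_apply _ MeasurableSet.univ]
  simp only [Measure.smul_apply, smul_eq_mul]
  have h : ∀ k, maxLaw ν k Set.univ = 1 := fun k => (isProbabilityMeasure_maxLaw k).measure_univ
  simp only [h, mul_one]
  exact p.tsum_coe

lemma mixture_Iic_neg (p : PMF ℕ) {t : ℝ} (ht : t < 0) :
    (Measure.sum fun k => p k • maxLaw ν k) (Set.Iic t) = 0 := by
  rw [Measure.sum_apply _ measurableSet_Iic]
  simp only [Measure.smul_apply, smul_eq_mul]
  simp [maxLaw_Iic_neg _ ht]

lemma maxLaw_one (hsupp : ν (Set.Iio 0) = 0) : maxLaw ν 1 = ν := by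
  have h0 : (fun v : Fin 1 → ℝ => (List.ofFn v).foldr max 0)
      = (fun x : ℝ => max x 0) ∘ fun v : Fin 1 → ℝ => v 0 := by
    funext v
    show fmax v = max (v 0) 0
    rw [fmax_succ, fmax_zero]
  have hmax : Measurable fun x : ℝ => max x 0 := by
    exact measurable_id.max measurable_const
  unfold maxLaw
  rw [h0, ← Measure.map_map hmax (measurable_pi_apply 0), map_eval_pi]
  have hae : (fun x : ℝ => max x 0) =ᵐ[ν] id := by
    rw [Filter.EventuallyEq, ae_iff]
    refine measure_mono_null (fun x hx => ?_) hsupp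
    simp only [Set.mem_setOf_eq, id_eq] at hx
    simp only [Set.mem_Iio]
    by_contra hge
    push_neg at hge
    exact hx (max_eq_left hge)
  rw [Measure.map_congr hae, Measure.map_id]

end RootBonusAux
namespace RootBonusAux

open MeasureTheory

variable {ν : Measure ℝ} [IsProbabilityMeasure ν]

/-- The joint law of the root weight and the root bonuses of the `r` subtrees. -/
lemma split_law (r d : ℕ) :
    Measure.map (fun w : TreeNode r (d + 1) → ℝ =>
        ((w (root r (d + 1)), fun i : Fin r => Sfun r d (fun m => w (cons i m)) (root r d))
          : ℝ × (Fin r → ℝ)))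
        (Measure.pi fun _ : TreeNode r (d + 1) => ν)
      = ν.prod (Measure.pi fun _ : Fin r =>
          Measure.map (fun z : TreeNode r d → ℝ => Sfun r d z (root r d))
            (Measure.pi fun _ : TreeNode r d => ν)) := by
  have hFm : Measurable fun z : TreeNode r d → ℝ => Sfun r d z (root r d) := measurable_Sfun _
  -- index equivalence
  set E : (Unit ⊕ (Fin r × TreeNode r d)) ≃ TreeNode r (d + 1) :=
    { toFun := Sum.elim (fun _ => root r (d + 1)) fun p => cons p.1 p.2
      invFun := fun l =>
        match l with
        | ⟨[], _⟩ => Sum.inl ()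
        | ⟨i :: m, h⟩ => Sum.inr (i, ⟨m, by simpa using h⟩)
      left_inv := by
        rintro (u | ⟨i, m⟩)
        · rfl
        · rfl
      right_inv := by
        rintro ⟨l, hl⟩
        cases l with
        | nil => rfl
        | cons i m => rfl } with hEdef
  have hR : Measurable fun w : TreeNode r (d + 1) → ℝ =>
      fun x : Unit ⊕ (Fin r × TreeNode r d) => w (E x) :=
    measurable_pi_lambda _ fun x => measurable_pi_apply _
  have hev : Measurable fun u : Unit → ℝ => u () := measurable_pi_apply _
  have hΨm : Measurable fun g : Fin r × TreeNode r d → ℝ =>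
      fun i : Fin r => Sfun r d (fun m => g (i, m)) (root r d) :=
    measurable_pi_lambda _ fun i =>
      hFm.comp (measurable_pi_lambda _ fun m => measurable_pi_apply _)
  have hcomp : (fun w : TreeNode r (d + 1) → ℝ =>
        ((w (root r (d + 1)), fun i : Fin r => Sfun r d (fun m => w (cons i m)) (root r d))
          : ℝ × (Fin r → ℝ)))
      = (Prod.map (fun u : Unit → ℝ => u ())
            (fun g : Fin r × TreeNode r d → ℝ =>
              fun i : Fin r => Sfun r d (fun m => g (i, m)) (root r d)))
        ∘ (⇑(MeasurableEquiv.sumPiEquivProdPi (fun _ : Unit ⊕ (Fin r × TreeNode r d) => ℝ)))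
        ∘ (fun w : TreeNode r (d + 1) → ℝ => fun x => w (E x)) := by
    funext w
    simp only [Function.comp_apply, MeasurableEquiv.sumPiEquivProdPi, MeasurableEquiv.coe_mk,
      Equiv.sumPiEquivProdPi, Equiv.coe_fn_mk, Prod.map]
    rfl
  rw [hcomp,
    ← Measure.map_map (hev.prodMap hΨm)
      ((MeasurableEquiv.sumPiEquivProdPi (fun _ : Unit ⊕ (Fin r × TreeNode r d) => ℝ)).measurable.comp hR),
    ← Measure.map_map
      (MeasurableEquiv.sumPiEquivProdPi (fun _ : Unit ⊕ (Fin r × TreeNode r d) => ℝ)).measurable hR,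
    pi_map_reindex E ν,
    (measurePreserving_sumPiEquivProdPi (fun _ : Unit ⊕ (Fin r × TreeNode r d) => ν)).map_eq,
    ← Measure.map_prod_map _ _ hev hΨm, map_eval_pi ν (),
    key_split r ν (fun z : TreeNode r d → ℝ => Sfun r d z (root r d)) hFm]

variable [NullSingletonClass ν]

/-- One-step recursion for the law of the root bonus. -/
lemma step_law (r d : ℕ) (hsupp : ν (Set.Iio 0) = 0) (η : Measure ℝ) [IsProbabilityMeasure η]
    (hIH : η = Measure.sum fun k => Xd d r k • maxLaw ν k) :
    Measure.map (fun q : ℝ × (Fin r → ℝ) => if fmax q.2 < q.1 then q.1 else 0)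
        (ν.prod (Measure.pi fun _ : Fin r => η))
      = Measure.sum fun k => Xd (d + 1) r k • maxLaw ν k := by
  have hφm : Measurable fun q : ℝ × (Fin r → ℝ) => if fmax q.2 < q.1 then q.1 else 0 :=
    Measurable.ite (measurableSet_lt (measurable_fmax.comp measurable_snd) measurable_fst)
      measurable_fst measurable_const
  haveI hπ : IsProbabilityMeasure (Measure.pi fun _ : Fin r => η) := by infer_instance
  haveI hL : IsProbabilityMeasure
      (Measure.map (fun q : ℝ × (Fin r → ℝ) => if fmax q.2 < q.1 then q.1 else 0)
        (ν.prod (Measure.pi fun _ : Fin r => η))) :=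
    Measure.isProbabilityMeasure_map hφm.aemeasurable
  haveI hRp : IsProbabilityMeasure (Measure.sum fun k => Xd (d + 1) r k • maxLaw ν k) :=
    mixture_prob _
  refine Measure.ext_of_Iic _ _ fun t => ?_
  by_cases ht : t < 0
  · rw [Measure.map_apply hφm measurableSet_Iic]
    have hz : (ν.prod (Measure.pi fun _ : Fin r => η)) (Set.Iic t ×ˢ Set.univ) = 0 := by
      rw [Measure.prod_prod]
      have h0 : ν (Set.Iic t) = 0 :=
        measure_mono_null (fun x hx => lt_of_le_of_lt hx ht) hsupp
      rw [h0, zero_mul]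
    have hsub : (fun q : ℝ × (Fin r → ℝ) => if fmax q.2 < q.1 then q.1 else 0) ⁻¹' Set.Iic t
        ⊆ Set.Iic t ×ˢ Set.univ := by
      intro q hq
      rw [Set.mem_preimage] at hq
      by_cases hc : fmax q.2 < q.1
      · rw [if_pos hc] at hq
        exact ⟨hq, trivial⟩
      · rw [if_neg hc] at hq
        exact absurd hq (not_le.mpr ht)
    rw [measure_mono_null hsub hz, mixture_Iic_neg _ ht]
  · push_neg at ht
    rw [← Set.compl_Ioi, prob_compl_eq_one_sub measurableSet_Ioi,
      prob_compl_eq_one_sub measurableSet_Ioi]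
    congr 1
    -- LHS on Ioi t
    rw [Measure.map_apply hφm measurableSet_Ioi,
      Measure.prod_apply (hφm measurableSet_Ioi)]
    have hsec : ∀ x : ℝ,
        (Measure.pi fun _ : Fin r => η)
          (Prod.mk x ⁻¹'
            ((fun q : ℝ × (Fin r → ℝ) => if fmax q.2 < q.1 then q.1 else 0) ⁻¹' Set.Ioi t))
        = Set.indicator (Set.Ioi t)
            (fun x => ∑' nn, conv r (Xd d r) nn * ν (Set.Iio x) ^ nn) x := by
      intro x
      by_cases hx : t < x
      · have hxpos : 0 < x := lt_of_le_of_lt ht hx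
        have hset : Prod.mk x ⁻¹'
              ((fun q : ℝ × (Fin r → ℝ) => if fmax q.2 < q.1 then q.1 else 0) ⁻¹' Set.Ioi t)
            = Set.univ.pi fun _ : Fin r => Set.Iio x := by
          ext s
          simp only [Set.mem_preimage, Set.mem_Ioi, Set.mem_pi, Set.mem_univ, forall_const,
            Set.mem_Iio]
          constructor
          · intro hcond
            by_cases hc : fmax s < x
            · exact (fmax_lt_iff s hxpos).mp hc
            · rw [if_neg hc] at hcond
              exact absurd hcond (not_lt.mpr ht)
          · intro hall
            rw [if_pos ((fmax_lt_iff s hxpos).mpr hall)]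
            exact hx
        rw [hset, Measure.pi_pi, Set.indicator_of_mem (Set.mem_Ioi.mpr hx)]
        simp only [Finset.prod_const, Finset.card_univ, Fintype.card_fin]
        have hG : η (Set.Iio x) = ∑' k, Xd d r k * ν (Set.Iio x) ^ k := by
          rw [hIH, Measure.sum_apply _ measurableSet_Iio]
          simp only [Measure.smul_apply, smul_eq_mul]
          exact tsum_congr fun k => by rw [maxLaw_Iio k hxpos]
        rw [hG, conv_genfun (Xd d r) (ν (Set.Iio x)) r]
      · have hset : Prod.mk x ⁻¹'
              ((fun q : ℝ × (Fin r → ℝ) => if fmax q.2 < q.1 then q.1 else 0) ⁻¹' Set.Ioi t)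
            = ∅ := by
          ext s
          simp only [Set.mem_preimage, Set.mem_Ioi, Set.mem_empty_iff_false, iff_false, not_lt]
          by_cases hc : fmax s < x
          · rw [if_pos hc]
            exact not_lt.mp hx
          · rw [if_neg hc]
            exact ht
        rw [hset, measure_empty,
          Set.indicator_of_notMem (fun hc => hx (Set.mem_Ioi.mp hc))]
    rw [lintegral_congr hsec, lintegral_indicator measurableSet_Ioi]
    have hFm' : Measurable fun x : ℝ => ν (Set.Iio x) :=
      Monotone.measurable fun a b hab => measure_mono (Set.Iio_subset_Iio hab)
    rw [lintegral_tsum fun nn => ((hFm'.pow_const nn).const_mul _).aemeasurable]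
    -- RHS on Ioi t
    rw [Measure.sum_apply _ measurableSet_Ioi]
    simp only [Measure.smul_apply, smul_eq_mul]
    have hRHS : ∑' k, Xd (d + 1) r k * maxLaw ν k (Set.Ioi t)
        = ∑' nn, conv r (Xd d r) nn * (((nn : ℝ≥0∞) + 1)⁻¹ * maxLaw ν (nn + 1) (Set.Ioi t)) := by
      have hb : ∀ k, Xd (d + 1) r k * maxLaw ν k (Set.Ioi t)
          = ((conv r (Xd d r)).bind Bstep) k * maxLaw ν k (Set.Ioi t) := fun k => rfl
      rw [tsum_congr hb]
      exact bind_Bstep_mix _ _ (maxLaw_Ioi_zero_of_nonneg ht)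
    rw [hRHS]
    refine tsum_congr fun nn => ?_
    rw [lintegral_const_mul _ (hFm'.pow_const nn)]
    congr 1
    rw [key_integral nn ht, ← mul_assoc,
      ENNReal.inv_mul_cancel (by simp)
        (ENNReal.add_ne_top.mpr ⟨ENNReal.natCast_ne_top nn, ENNReal.one_ne_top⟩),
      one_mul]

end RootBonusAux
open RootBonusAux

/-- If the nodes of `T(r,d)` are weighted i.i.d. from a continuous distribution `ν` on
`[0,∞)`, then the bonus `S(0)` of the root is distributed as `W^{<X_{d,r}>}`: its law is the
mixture over `k` of `P(X_{d,r} = k)` times the law of the maximum of `k` i.i.d. samples. -/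
theorem root_bonus_distribution (r d : ℕ) (hr : 1 ≤ r) (ν : Measure ℝ)
    [IsProbabilityMeasure ν] [NullSingletonClass ν] (hsupp : ν (Set.Iio 0) = 0) :
    Measure.map (fun w : TreeNode r d → ℝ => Sfun r d w ⟨[], by simp⟩)
        (Measure.pi fun _ : TreeNode r d => ν) =
      Measure.sum fun k : ℕ => Xd d r k • maxLaw ν k := by
  induction d with
  | zero =>
    have hfun : (fun w : TreeNode r 0 → ℝ => Sfun r 0 w ⟨[], by simp⟩)
        = fun w => w (root r 0) :=
      funext fun w => Sfun_leaf w _ rfl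
    rw [hfun, map_eval_pi]
    have hXd : Xd 0 r = PMF.pure 1 := rfl
    ext s hs
    rw [Measure.sum_apply _ hs, tsum_eq_single 1]
    · rw [hXd, PMF.pure_apply, if_pos rfl, one_smul, maxLaw_one hsupp]
    · intro k hk
      rw [hXd, PMF.pure_apply, if_neg hk, zero_smul]
      rfl
  | succ d ih =>
    have hFm : Measurable fun z : TreeNode r d → ℝ => Sfun r d z (root r d) :=
      measurable_Sfun _
    set η := Measure.map (fun z : TreeNode r d → ℝ => Sfun r d z (root r d))
        (Measure.pi fun _ : TreeNode r d => ν) with hηdef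
    haveI : IsProbabilityMeasure η := Measure.isProbabilityMeasure_map hFm.aemeasurable
    have hIH : η = Measure.sum fun k => Xd d r k • maxLaw ν k := by
      rw [hηdef]; exact ih
    have hΦ1m : Measurable fun w : TreeNode r (d + 1) → ℝ =>
        ((w (root r (d + 1)),
          fun i : Fin r => Sfun r d (fun m => w (cons i m)) (root r d)) : ℝ × (Fin r → ℝ)) :=
      (measurable_pi_apply _).prodMk
        (measurable_pi_lambda _ fun i =>
          hFm.comp (measurable_pi_lambda _ fun m => measurable_pi_apply _))
    have hφm : Measurable fun q : ℝ × (Fin r → ℝ) => if fmax q.2 < q.1 then q.1 else 0 :=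
      Measurable.ite (measurableSet_lt (measurable_fmax.comp measurable_snd) measurable_fst)
        measurable_fst measurable_const
    have hfun : (fun w : TreeNode r (d + 1) → ℝ => Sfun r (d + 1) w ⟨[], by simp⟩)
        = (fun q : ℝ × (Fin r → ℝ) => if fmax q.2 < q.1 then q.1 else 0)
          ∘ (fun w : TreeNode r (d + 1) → ℝ =>
              ((w (root r (d + 1)),
                fun i : Fin r => Sfun r d (fun m => w (cons i m)) (root r d))
                : ℝ × (Fin r → ℝ))) := by
      funext w
      show Sfun r (d + 1) w (root r (d + 1)) = _
      rw [Sfun_root_succ]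
      rfl
    rw [hfun, ← Measure.map_map hφm hΦ1m, split_law r d, ← hηdef]
    exact step_law r d hsupp η hIH
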